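/- arXiv:2302.14737 — 3 statements merged into one kernel-verified Lean document; each statement's English description precedes it below -/
import Mathlib

section
/- Let 1 ≤ ℓ ≤ k be integers, and consider a coloring of a set S of size k such that each color occurs at most k/ℓ times. Then S can be partitioned into ⌊k/ℓ⌋ sets of size exactly ℓ, together with one set of size k - ⌊k/ℓ⌋·ℓ, such that within each set of the partition all elements have pairwise distinct colors. -/
open Finset

/-- Choose one element of `S` of each color in `C`. -/
lemma exists_transversal {α β : Type*} [DecidableEq α] [DecidableEq β] (c : α → β)
    (S : Finset α) :
    ∀ C : Finset β, (∀ b ∈ C, ∃ a ∈ S, c a = b) →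
      ∃ T : Finset α, T ⊆ S ∧ T.image c = C ∧ T.card = C.card := by
  intro C
  induction C using Finset.induction_on with
  | empty => exact fun _ => ⟨∅, by simp⟩
  | @insert b s hb ih =>
    intro h
    obtain ⟨T', hT'S, hT'img, hT'card⟩ := ih (fun b' hb' => h b' (mem_insert_of_mem hb'))
    obtain ⟨a, haS, hab⟩ := h b (mem_insert_self b s)
    have haT' : a ∉ T' := by
      intro ha
      exact hb (by rw [← hT'img]; exact hab ▸ mem_image_of_mem c ha)
    refine ⟨insert a T', ?_, ?_, ?_⟩
    · exact insert_subset haS hT'S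
    · rw [image_insert, hT'img, hab]
    · rw [card_insert_of_notMem haT', card_insert_of_notMem hb, hT'card]

/-- Extending a partition by one more (disjoint) part, at the last index. -/
lemma snoc_partition {α : Type*} [DecidableEq α] {m : ℕ} (Q : Fin m → Finset α)
    (R S' S : Finset α)
    (hQdisj : ∀ i j, i ≠ j → Disjoint (Q i) (Q j))
    (hQunion : Finset.univ.biUnion Q = S')
    (hdisjS' : S' = S \ R) (hRS : R ⊆ S) :
    (∀ i j : Fin (m + 1), i ≠ j →
        Disjoint (Fin.snoc (α := fun _ => Finset α) Q R i)
          (Fin.snoc (α := fun _ => Finset α) Q R j)) ∧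
      Finset.univ.biUnion (Fin.snoc (α := fun _ => Finset α) Q R) = S := by
  have hQsub : ∀ j, Q j ⊆ S' := by
    intro j a ha
    rw [← hQunion]
    exact mem_biUnion.mpr ⟨j, mem_univ j, ha⟩
  have hQR : ∀ j, Disjoint (Q j) R := by
    intro j
    exact Finset.disjoint_left.mpr fun a ha ha' =>
      (mem_sdiff.mp (hdisjS' ▸ hQsub j ha)).2 ha'
  constructor
  · intro i j hij
    rcases Fin.eq_castSucc_or_eq_last i with ⟨i', rfl⟩ | rfl <;>
      rcases Fin.eq_castSucc_or_eq_last j with ⟨j', rfl⟩ | rfl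
    · simp only [Fin.snoc_castSucc]
      exact hQdisj i' j' (fun h => hij (by rw [h]))
    · simp only [Fin.snoc_castSucc, Fin.snoc_last]
      exact hQR i'
    · simp only [Fin.snoc_castSucc, Fin.snoc_last]
      exact (hQR j').symm
    · exact absurd rfl hij
  · ext a
    simp only [mem_biUnion, mem_univ, true_and]
    constructor
    · rintro ⟨i, hi⟩
      rcases Fin.eq_castSucc_or_eq_last i with ⟨i', rfl⟩ | rfl
      · rw [Fin.snoc_castSucc] at hi
        exact (mem_sdiff.mp (hdisjS' ▸ hQsub i' hi)).1
      · rw [Fin.snoc_last] at hi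
        exact hRS hi
    · intro ha
      by_cases haR : a ∈ R
      · exact ⟨Fin.last m, by rw [Fin.snoc_last]; exact haR⟩
      · have : a ∈ S' := hdisjS' ▸ mem_sdiff.mpr ⟨ha, haR⟩
        rw [← hQunion] at this
        obtain ⟨j, _, hj⟩ := mem_biUnion.mp this
        exact ⟨j.castSucc, by rw [Fin.snoc_castSucc]; exact hj⟩

/-- Main lemma: a set of size `m * ℓ` whose color classes all have size at most `m`
can be partitioned into `m` rainbow sets of size `ℓ`. -/
lemma rainbow_partition {α β : Type*} [DecidableEq α] [DecidableEq β] (c : α → β)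
    (ℓ : ℕ) (hℓ : 1 ≤ ℓ) :
    ∀ m : ℕ, ∀ S : Finset α, S.card = m * ℓ →
      (∀ b, (S.filter fun a => c a = b).card ≤ m) →
      ∃ P : Fin m → Finset α,
        (∀ i j, i ≠ j → Disjoint (P i) (P j)) ∧
        Finset.univ.biUnion P = S ∧
        (∀ i, (P i).card = ℓ) ∧
        (∀ i, Set.InjOn c (P i)) := by
  intro m
  induction m with
  | zero =>
    intro S hcard _
    refine ⟨fun i => ∅, fun i => i.elim0, ?_, fun i => i.elim0, fun i => i.elim0⟩
    have : S = ∅ := card_eq_zero.mp (by simpa using hcard)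
    simp [this]
  | succ m ih =>
    intro S hcard hfib
    set B := S.image c with hB
    have hBcard : ℓ ≤ B.card := by
      have := Finset.card_le_mul_card_image (f := c) S (m + 1)
        (fun b _ => hfib b)
      rw [hcard] at this
      exact Nat.le_of_mul_le_mul_left (by linarith [this]) (Nat.succ_pos m)
    set Bmax := B.filter (fun b => (S.filter fun a => c a = b).card = m + 1) with hBmax
    have hBmaxcard : Bmax.card ≤ ℓ := by
      by_contra hlt
      push_neg at hlt
      have hsum : ∀ b ∈ Bmax, m + 1 ≤ (S.filter fun a => c a = b).card := by
        intro b hb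
        rw [hBmax, mem_filter] at hb
        exact hb.2.ge
      have h1 : Bmax.card * (m + 1) ≤ ∑ b ∈ Bmax, (S.filter fun a => c a = b).card := by
        calc Bmax.card * (m + 1) = ∑ _b ∈ Bmax, (m + 1) := by rw [sum_const, smul_eq_mul]
        _ ≤ _ := Finset.sum_le_sum hsum
      have h2 : ∑ b ∈ Bmax, (S.filter fun a => c a = b).card ≤
          ∑ b ∈ B, (S.filter fun a => c a = b).card :=
        Finset.sum_le_sum_of_subset (filter_subset _ _)
      have h3 : ∑ b ∈ B, (S.filter fun a => c a = b).card = S.card :=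
        (Finset.card_eq_sum_card_fiberwise (fun a ha => mem_image_of_mem c ha)).symm
      rw [h3, hcard] at h2
      have : Bmax.card * (m + 1) ≤ (m + 1) * ℓ := le_trans h1 h2
      nlinarith
    obtain ⟨C, hBmaxC, hCB, hCcard⟩ :=
      Finset.exists_subsuperset_card_eq (s := Bmax) (t := B) (n := ℓ - Bmax.card + Bmax.card)
        (filter_subset _ _) (by omega) (by omega)
    have hCcard' : C.card = ℓ := by omega
    obtain ⟨T, hTS, hTimg, hTcard⟩ := exists_transversal c S C (by
      intro b hb
      have : b ∈ B := hCB hb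
      rw [hB, mem_image] at this
      obtain ⟨a, ha, hab⟩ := this
      exact ⟨a, ha, hab⟩)
    have hTinj : Set.InjOn c ↑T := by
      rw [← Finset.card_image_iff]
      rw [hTimg, hTcard]
    set S' := S \ T with hS'
    have hTcardℓ : T.card = ℓ := hTcard.trans hCcard'
    have hS'card : S'.card = m * ℓ := by
      rw [hS', card_sdiff_of_subset hTS, hcard, hTcardℓ]
      have : (m + 1) * ℓ = m * ℓ + ℓ := by ring
      omega
    have hfibT : ∀ b, (T.filter fun a => c a = b).card ≤ 1 := by
      intro b
      by_contra hgt
      push_neg at hgt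
      obtain ⟨a₁, ha₁, a₂, ha₂, hne⟩ := Finset.one_lt_card.mp hgt
      rw [mem_filter] at ha₁ ha₂
      exact hne (hTinj ha₁.1 ha₂.1 (ha₁.2.trans ha₂.2.symm))
    have hfib' : ∀ b, (S'.filter fun a => c a = b).card ≤ m := by
      intro b
      have hsplit : (S'.filter fun a => c a = b) =
          (S.filter fun a => c a = b) \ (T.filter fun a => c a = b) := by
        rw [hS']
        ext a
        simp only [mem_filter, mem_sdiff]
        tauto
      by_cases hbig : (S.filter fun a => c a = b).card = m + 1
      · have hbB : b ∈ Bmax := by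
          rw [hBmax, mem_filter]
          constructor
          · have : (S.filter fun a => c a = b).Nonempty := by
              rw [← card_pos, hbig]; omega
            obtain ⟨a, ha⟩ := this
            rw [mem_filter] at ha
            exact ha.2 ▸ mem_image_of_mem c ha.1
          · exact hbig
        have hbC : b ∈ C := hBmaxC hbB
        have hbT : (T.filter fun a => c a = b).card = 1 := by
          refine le_antisymm (hfibT b) ?_
          rw [Nat.succ_le_iff, card_pos]
          have : b ∈ T.image c := hTimg ▸ hbC
          rw [mem_image] at this
          obtain ⟨a, ha, hab⟩ := this
          exact ⟨a, mem_filter.mpr ⟨ha, hab⟩⟩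
        have hsub : (T.filter fun a => c a = b) ⊆ (S.filter fun a => c a = b) :=
          filter_subset_filter _ hTS
        rw [hsplit, card_sdiff_of_subset hsub, hbig, hbT]
        omega
      · have := hfib b
        have hle : (S.filter fun a => c a = b).card ≤ m := by omega
        calc (S'.filter fun a => c a = b).card ≤ (S.filter fun a => c a = b).card := by
              rw [hsplit]; exact card_le_card (sdiff_subset)
          _ ≤ m := hle
    obtain ⟨Q, hQdisj, hQunion, hQcard, hQinj⟩ := ih S' hS'card hfib'
    obtain ⟨hPdisj, hPunion⟩ := snoc_partition Q T S' S hQdisj hQunion hS' hTS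
    refine ⟨Fin.snoc Q T, hPdisj, hPunion, ?_, ?_⟩
    · intro i
      rcases Fin.eq_castSucc_or_eq_last i with ⟨i', rfl⟩ | rfl
      · rw [Fin.snoc_castSucc]; exact hQcard i'
      · rw [Fin.snoc_last]; exact hTcardℓ
    · intro i
      rcases Fin.eq_castSucc_or_eq_last i with ⟨i', rfl⟩ | rfl
      · rw [Fin.snoc_castSucc]; exact hQinj i'
      · rw [Fin.snoc_last]; exact hTinj

theorem stmt_0 {α β : Type*} [DecidableEq α] [DecidableEq β] (k ℓ : ℕ)
    (hℓ : 1 ≤ ℓ) (hk : ℓ ≤ k)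
    (S : Finset α) (hS : S.card = k) (c : α → β)
    (hcol : ∀ b : β, ((S.filter fun a => c a = b).card : ℚ) ≤ (k : ℚ) / (ℓ : ℚ)) :
    ∃ P : Fin (k / ℓ + 1) → Finset α,
      (∀ i j, i ≠ j → Disjoint (P i) (P j)) ∧
      Finset.univ.biUnion P = S ∧
      (∀ i : Fin (k / ℓ + 1), (i : ℕ) < k / ℓ → (P i).card = ℓ) ∧
      (P (Fin.last (k / ℓ))).card = k - (k / ℓ) * ℓ ∧
      (∀ i, Set.InjOn c (P i)) := by
  set m := k / ℓ with hm
  set r := k % ℓ with hr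
  have hℓpos : 0 < ℓ := hℓ
  have hmpos : 1 ≤ m := (Nat.one_le_div_iff hℓpos).mpr hk
  have hkdecomp : m * ℓ + r = k := by
    rw [hm, hr, Nat.mul_comm]
    exact Nat.div_add_mod k ℓ
  have hrem : k - m * ℓ = r := by omega
  have hrℓ : r < ℓ := Nat.mod_lt k hℓpos
  -- color classes have size at most m
  have hfib : ∀ b, (S.filter fun a => c a = b).card ≤ m := by
    intro b
    rw [hm, Nat.le_div_iff_mul_le hℓpos]
    have h := hcol b
    have : ((S.filter fun a => c a = b).card * ℓ : ℚ) ≤ (k : ℚ) := by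
      rw [← le_div_iff₀ (by exact_mod_cast hℓpos)]
      exact h
    exact_mod_cast this
  -- there are at least r colors
  have hBcard : r ≤ (S.image c).card := by
    have h := Finset.card_le_mul_card_image (f := c) S m (fun b _ => hfib b)
    rw [hS] at h
    by_contra hlt
    push_neg at hlt
    have h2 : m * (S.image c).card < m * ℓ :=
      (Nat.mul_lt_mul_left hmpos).mpr (lt_of_lt_of_le hlt hrℓ.le)
    have hle : m * ℓ ≤ k := by omega
    exact absurd (h.trans_lt (h2.trans_le hle)) (lt_irrefl k)
  -- pick a rainbow remainder set R of size r
  obtain ⟨CR, hCRB, hCRcard⟩ := Finset.exists_subset_card_eq hBcard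
  obtain ⟨R, hRS, hRimg, hRcard⟩ := exists_transversal c S CR (by
    intro b hb
    obtain ⟨a, ha, hab⟩ := mem_image.mp (hCRB hb)
    exact ⟨a, ha, hab⟩)
  have hRinj : Set.InjOn c ↑R := by
    rw [← Finset.card_image_iff, hRimg, hRcard]
  have hRcard' : R.card = r := hRcard.trans hCRcard
  set S' := S \ R with hS'
  have hS'card : S'.card = m * ℓ := by
    rw [hS', card_sdiff_of_subset hRS, hS, hRcard']; omega
  have hfib' : ∀ b, (S'.filter fun a => c a = b).card ≤ m := by
    intro b
    exact le_trans (card_le_card (filter_subset_filter _ sdiff_subset)) (hfib b)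
  obtain ⟨Q, hQdisj, hQunion, hQcard, hQinj⟩ := rainbow_partition c ℓ hℓ m S' hS'card hfib'
  obtain ⟨hPdisj, hPunion⟩ := snoc_partition Q R S' S hQdisj hQunion hS' hRS
  refine ⟨Fin.snoc Q R, hPdisj, hPunion, ?_, ?_, ?_⟩
  · intro i hi
    have hieq : i = Fin.castSucc ⟨(i : ℕ), hi⟩ := Fin.ext rfl
    rw [hieq, Fin.snoc_castSucc]
    exact hQcard _
  · rw [Fin.snoc_last, hrem]
    exact hRcard'
  · intro i
    rcases Fin.eq_castSucc_or_eq_last i with ⟨i', rfl⟩ | rfl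
    · rw [Fin.snoc_castSucc]; exact hQinj i'
    · rw [Fin.snoc_last]; exact hRinj
end

section
/- Let m = ⌊k/ℓ⌋ and r = k - mℓ where 1 ≤ ℓ ≤ k. Then {1,...,k} can be partitioned into sets I_1, ..., I_m each of size ℓ, and a set I_{m+1} of size r, such that for every j and any two distinct elements x, y ∈ I_j we have |x - y| ≥ m. -/
theorem stmt_1 (k ℓ m r : ℕ) (hℓ : 1 ≤ ℓ) (hk : ℓ ≤ k)
    (hm : m = k / ℓ) (hr : r = k - m * ℓ) :
    ∃ I : Fin (m + 1) → Finset ℕ,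
      (∀ i j, i ≠ j → Disjoint (I i) (I j)) ∧
      Finset.univ.biUnion I = Finset.Icc 1 k ∧
      (∀ i : Fin (m + 1), (i : ℕ) < m → (I i).card = ℓ) ∧
      (I (Fin.last m)).card = r ∧
      (∀ i, ∀ x ∈ I i, ∀ y ∈ I i, x ≠ y → (m : ℤ) ≤ |(x : ℤ) - (y : ℤ)|) := by
  have hℓ0 : 0 < ℓ := hℓ
  have h1 : m * ℓ ≤ k := by rw [hm]; exact Nat.div_mul_le_self k ℓ
  have hk' : k = m * ℓ + r := by rw [hr]; exact (Nat.add_sub_cancel' h1).symm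
  have hm1 : 1 ≤ m := by rw [hm]; exact (Nat.one_le_div_iff hℓ0).mpr hk
  have hrℓ : r < ℓ := by
    by_contra h
    push_neg at h
    have h3 : (m + 1) * ℓ ≤ k := by nlinarith
    have h4 := (Nat.le_div_iff_mul_le hℓ0).mpr h3
    rw [← hm] at h4
    omega
  set f : ℕ → ℕ → ℕ := fun i t => t * m + min t r + i + 1 with hf
  have hmono : ∀ t t' : ℕ, t < t' → t * m + min t r + m ≤ t' * m + min t' r := by
    intro t t' h
    have h3 : (t + 1) * m ≤ t' * m := mul_le_mul_left h m
    have h4 : min t r ≤ min t' r := by omega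
    have h5 : (t + 1) * m = t * m + m := by ring
    linarith
  have hmono' : ∀ t t' : ℕ, t < t' → t < r → t * m + min t r + m + 1 ≤ t' * m + min t' r := by
    intro t t' h h'
    have h3 : (t + 1) * m ≤ t' * m := mul_le_mul_left h m
    have h4 : min t r + 1 ≤ min t' r := by omega
    have h5 : (t + 1) * m = t * m + m := by ring
    linarith
  set I : Fin (m + 1) → Finset ℕ :=
    fun i => (Finset.range (if (i : ℕ) = m then r else ℓ)).image (f (i : ℕ)) with hI
  have hinj : ∀ i : ℕ, Function.Injective (f i) := by
    intro i t t' heq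
    by_contra hne
    simp only [hf] at heq
    rcases Nat.lt_or_ge t t' with h | h
    · have := hmono t t' h; linarith
    · have := hmono t' t (by omega); linarith
  have hcards : ∀ i : Fin (m + 1), (I i).card = if (i : ℕ) = m then r else ℓ := by
    intro i
    simp only [hI]
    rw [Finset.card_image_of_injective _ (hinj i), Finset.card_range]
  have hkey : ∀ i t i' t' : ℕ, i ≤ m → i' ≤ m → (i = m → t < r) → (i' = m → t' < r) →
      f i t = f i' t' → i = i' ∧ t = t' := by
    intro i t i' t' hi hi' hir hir' heq
    simp only [hf] at heq
    rcases lt_trichotomy t t' with h | h | h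
    · exfalso
      rcases Nat.lt_or_ge i m with him | him
      · have := hmono t t' h; linarith
      · have := hmono' t t' h (hir (le_antisymm hi him)); linarith
    · subst h
      refine ⟨by linarith, rfl⟩
    · exfalso
      rcases Nat.lt_or_ge i' m with him | him
      · have := hmono t' t h; linarith
      · have := hmono' t' t h (hir' (le_antisymm hi' him)); linarith
  have hdisj : ∀ i j : Fin (m + 1), i ≠ j → Disjoint (I i) (I j) := by
    intro i j hij
    rw [Finset.disjoint_left]
    intro x hx hx'
    simp only [hI, Finset.mem_image, Finset.mem_range] at hx hx'
    obtain ⟨t, ht, hxt⟩ := hx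
    obtain ⟨t', ht', hxt'⟩ := hx'
    have hi : (i : ℕ) ≤ m := Nat.lt_succ_iff.mp i.isLt
    have hj : (j : ℕ) ≤ m := Nat.lt_succ_iff.mp j.isLt
    have h2 := hkey (i : ℕ) t (j : ℕ) t' hi hj
      (fun h => by rwa [if_pos h] at ht)
      (fun h => by rwa [if_pos h] at ht')
      (hxt.trans hxt'.symm)
    exact hij (Fin.ext h2.1)
  have hsub : ∀ i : Fin (m + 1), I i ⊆ Finset.Icc 1 k := by
    intro i x hx
    simp only [hI, Finset.mem_image, Finset.mem_range] at hx
    obtain ⟨t, ht, rfl⟩ := hx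
    simp only [Finset.mem_Icc, hf]
    refine ⟨Nat.le_add_left 1 _, ?_⟩
    rw [hk']
    by_cases hc : (i : ℕ) = m
    · rw [if_pos hc] at ht
      rw [hc]
      have h3 : (t + 1) * m ≤ r * m := mul_le_mul_left ht m
      have h4 : r * m ≤ ℓ * m := mul_le_mul_left hrℓ.le m
      have h5 : (t + 1) * m = t * m + m := by ring
      have h6 : ℓ * m = m * ℓ := mul_comm _ _
      have h7 : min t r + 1 ≤ r := by omega
      linarith
    · rw [if_neg hc] at ht
      have hi : (i : ℕ) + 1 ≤ m := by
        have := Nat.lt_succ_iff.mp i.isLt; omega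
      have h3 : (t + 1) * m ≤ ℓ * m := mul_le_mul_left ht m
      have h5 : (t + 1) * m = t * m + m := by ring
      have h6 : ℓ * m = m * ℓ := mul_comm _ _
      have h7 : min t r ≤ r := min_le_right _ _
      linarith
  have hunion : Finset.univ.biUnion I = Finset.Icc 1 k := by
    apply Finset.eq_of_subset_of_card_le
    · intro x hx
      rw [Finset.mem_biUnion] at hx
      obtain ⟨i, _, hxi⟩ := hx
      exact hsub i hxi
    · rw [Finset.card_biUnion fun i _ j _ h => hdisj i j h]
      have hsum : ∑ i : Fin (m + 1), (I i).card = m * ℓ + r := by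
        rw [Fin.sum_univ_castSucc]
        have h7 : ∀ i : Fin m, (I i.castSucc).card = ℓ := by
          intro i
          rw [hcards, if_neg]
          simp only [Fin.coe_castSucc]
          exact Nat.ne_of_lt i.isLt
        rw [Finset.sum_congr rfl fun i _ => h7 i, Finset.sum_const, Finset.card_univ,
          Fintype.card_fin, smul_eq_mul, hcards]
        simp [Fin.val_last]
      rw [Nat.card_Icc, hsum, ← hk']
      omega
  have hsep : ∀ i : Fin (m + 1), ∀ x ∈ I i, ∀ y ∈ I i, x ≠ y →
      (m : ℤ) ≤ |(x : ℤ) - (y : ℤ)| := by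
    intro i x hx y hy hne
    simp only [hI, Finset.mem_image, Finset.mem_range] at hx hy
    obtain ⟨t, ht, rfl⟩ := hx
    obtain ⟨t', ht', rfl⟩ := hy
    have key : ∀ a b : ℕ, a < b → (m : ℤ) ≤ |(f (i : ℕ) a : ℤ) - (f (i : ℕ) b : ℤ)| := by
      intro a b h
      have h2 := hmono a b h
      have h3 : f (i : ℕ) a + m ≤ f (i : ℕ) b := by simp only [hf]; linarith
      have h4 : (m : ℤ) ≤ (f (i : ℕ) b : ℤ) - (f (i : ℕ) a : ℤ) := by
        have h5 : ((f (i : ℕ) a + m : ℕ) : ℤ) ≤ ((f (i : ℕ) b : ℕ) : ℤ) := Nat.cast_le.mpr h3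
        rw [Nat.cast_add] at h5
        linarith
      calc (m : ℤ) ≤ (f (i : ℕ) b : ℤ) - (f (i : ℕ) a : ℤ) := h4
        _ ≤ |(f (i : ℕ) b : ℤ) - (f (i : ℕ) a : ℤ)| := le_abs_self _
        _ = |(f (i : ℕ) a : ℤ) - (f (i : ℕ) b : ℤ)| := abs_sub_comm _ _
    rcases lt_trichotomy t t' with h | h | h
    · exact key t t' h
    · exact absurd (by rw [h]) hne
    · rw [abs_sub_comm]; exact key t' t h
  exact ⟨I, hdisj, hunion,
    fun i hi => by rw [hcards, if_neg (Nat.ne_of_lt hi)],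
    by rw [hcards]; simp,
    hsep⟩
end

section
/- Let p be a prime, n ≥ 1, and let ℓ ≤ p. Suppose y_1, ..., y_p ∈ A ⊆ F_p^n satisfy y_1 + ... + y_p = 0, and suppose {1,...,p} is partitioned into sets S_1, ..., S_t of size ℓ and one set S_{t+1} of size r = p − tℓ, such that for each j the vectors y_i with i ∈ S_j are pairwise distinct. Further suppose that for each j ∈ {1,...,t}, the family of ℓ-element subsets of A of distinct elements summing to Σ_{i ∈ S_j} y_i has no cover of size at most p. Then A contains p pairwise distinct vectors x_1, ..., x_p with x_1 + ... + x_p = 0. -/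
theorem stmt_11 (p n ℓ t r : ℕ) [NeZero p] (hp : p.Prime) (hn : 1 ≤ n)
    (hℓp : ℓ ≤ p) (htℓ : t * ℓ ≤ p) (hr : r = p - t * ℓ)
    (A : Finset (Fin n → ZMod p))
    (y : Fin p → (Fin n → ZMod p)) (hyA : ∀ i, y i ∈ A) (hsum : ∑ i, y i = 0)
    (S : Fin (t + 1) → Finset (Fin p))
    (hdisj : ∀ i j, i ≠ j → Disjoint (S i) (S j))
    (hcover : Finset.univ.biUnion S = Finset.univ)
    (hcard : ∀ j : Fin (t + 1), (j : ℕ) < t → (S j).card = ℓ)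
    (hlast : (S (Fin.last t)).card = r)
    (hinj : ∀ j, Set.InjOn y (S j))
    (hnocover : ∀ j : Fin (t + 1), (j : ℕ) < t →
      ¬ ∃ Z ⊆ A, Z.card ≤ p ∧ ∀ T ⊆ A, T.card = ℓ →
        ∑ x ∈ T, x = ∑ i ∈ S j, y i → (T ∩ Z).Nonempty) :
    ∃ x : Fin p → (Fin n → ZMod p),
      Function.Injective x ∧ (∀ i, x i ∈ A) ∧ ∑ i, x i = 0 := by
  classical
  set L : Finset (Fin n → ZMod p) := (S (Fin.last t)).image y with hL
  have hLA : L ⊆ A := by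
    intro x hx
    simp only [hL, Finset.mem_image] at hx
    obtain ⟨i, _, rfl⟩ := hx
    exact hyA i
  have hLcard : L.card = r := by
    rw [hL, Finset.card_image_of_injOn (hinj (Fin.last t)), hlast]
  have hLsum : ∑ x ∈ L, x = ∑ i ∈ S (Fin.last t), y i := by
    rw [hL, Finset.sum_image]
    intro a ha b hb hab
    exact hinj (Fin.last t) ha hb hab
  -- key greedy construction
  have key : ∀ k, ∀ hk : k ≤ t, ∃ T : Fin k → Finset (Fin n → ZMod p),
      (∀ j, T j ⊆ A) ∧ (∀ j, (T j).card = ℓ) ∧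
      (∀ j, ∑ x ∈ T j, x = ∑ i ∈ S ⟨j.1, lt_of_lt_of_le j.isLt (le_trans hk (Nat.le_succ t))⟩, y i) ∧
      (∀ i j, i ≠ j → Disjoint (T i) (T j)) ∧
      (∀ j, Disjoint (T j) L) := by
    intro k
    induction k with
    | zero =>
      intro _
      exact ⟨fun j => Fin.elim0 j, fun j => Fin.elim0 j, fun j => Fin.elim0 j,
        fun j => Fin.elim0 j, fun i => Fin.elim0 i, fun j => Fin.elim0 j⟩
    | succ k ih =>
      intro hk
      obtain ⟨T, hTA, hTc, hTs, hTd, hTL⟩ := ih (Nat.le_of_succ_le hk)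
      set Z : Finset (Fin n → ZMod p) := L ∪ Finset.univ.biUnion T with hZ
      have hZA : Z ⊆ A := by
        rw [hZ]
        apply Finset.union_subset hLA
        intro x hx
        rw [Finset.mem_biUnion] at hx
        obtain ⟨j, _, hj⟩ := hx
        exact hTA j hj
      have hZcard : Z.card ≤ p := by
        calc Z.card ≤ L.card + (Finset.univ.biUnion T).card := Finset.card_union_le _ _
        _ ≤ r + ∑ j : Fin k, (T j).card := by
            gcongr
            · exact le_of_eq hLcard
            · exact Finset.card_biUnion_le
        _ = r + k * ℓ := by
            congr 1
            rw [Finset.sum_congr rfl (fun j _ => hTc j)]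
            simp [mul_comm]
        _ ≤ r + t * ℓ := by gcongr; exact Nat.le_of_succ_le hk
        _ ≤ p := by omega
      have hkt : (k : ℕ) < t := hk
      have hno := hnocover ⟨k, Nat.lt_succ_of_lt hkt⟩ hkt
      push_neg at hno
      obtain ⟨Tn, hTnA, hTnc, hTns, hTnZ⟩ := hno Z hZA hZcard
      rw [← Finset.disjoint_iff_inter_eq_empty] at hTnZ
      have hTsubZ : ∀ j : Fin k, T j ⊆ Z := by
        intro j x hx
        rw [hZ, Finset.mem_union, Finset.mem_biUnion]
        exact Or.inr ⟨j, Finset.mem_univ _, hx⟩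
      refine ⟨Fin.snoc T Tn, ?_, ?_, ?_, ?_, ?_⟩
      · intro j
        refine Fin.lastCases ?_ ?_ j
        · simpa using hTnA
        · intro i; simpa using hTA i
      · intro j
        refine Fin.lastCases ?_ ?_ j
        · simpa using hTnc
        · intro i; simpa using hTc i
      · intro j
        refine Fin.lastCases ?_ ?_ j
        · simp only [Fin.snoc_last]
          exact hTns
        · intro i
          simp only [Fin.snoc_castSucc]
          exact hTs i
      · intro i j hij
        induction i using Fin.lastCases with
        | last =>
          induction j using Fin.lastCases with
          | last => exact absurd rfl hij
          | cast j' =>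
            simp only [Fin.snoc_last, Fin.snoc_castSucc]
            exact hTnZ.mono_right (hTsubZ j')
        | cast i' =>
          induction j using Fin.lastCases with
          | last =>
            simp only [Fin.snoc_last, Fin.snoc_castSucc]
            exact (hTnZ.mono_right (hTsubZ i')).symm
          | cast j' =>
            simp only [Fin.snoc_castSucc]
            exact hTd i' j' (fun h => hij (by rw [h]))
      · intro j
        refine Fin.lastCases ?_ ?_ j
        · simp only [Fin.snoc_last]
          exact hTnZ.mono_right (by rw [hZ]; exact Finset.subset_union_left)
        · intro i; simpa using hTL i
  obtain ⟨T, hTA, hTc, hTs, hTd, hTL⟩ := key t le_rfl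
  set B : Finset (Fin n → ZMod p) := L ∪ Finset.univ.biUnion T with hB
  have hdLB : Disjoint L (Finset.univ.biUnion T) := by
    rw [Finset.disjoint_biUnion_right]
    exact fun j _ => (hTL j).symm
  have hbcard : (Finset.univ.biUnion T).card = t * ℓ := by
    rw [Finset.card_biUnion (fun i _ j _ hij => hTd i j hij)]
    rw [Finset.sum_congr rfl (fun j _ => hTc j)]
    simp [mul_comm]
  have hBcard : B.card = p := by
    rw [hB, Finset.card_union_of_disjoint hdLB, hLcard, hbcard]
    omega
  have hpart : ∑ j : Fin (t+1), ∑ i ∈ S j, y i = 0 := by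
    rw [← Finset.sum_biUnion (fun i _ j _ hij => hdisj i j hij), hcover]
    exact hsum
  have hBsum : ∑ x ∈ B, x = 0 := by
    rw [hB, Finset.sum_union hdLB, hLsum,
      Finset.sum_biUnion (fun i _ j _ hij => hTd i j hij)]
    rw [Finset.sum_congr rfl (fun j _ => hTs j)]
    rw [← hpart, Fin.sum_univ_castSucc, add_comm]
    congr 1
  have hBA : B ⊆ A := by
    rw [hB]
    apply Finset.union_subset hLA
    intro x hx
    rw [Finset.mem_biUnion] at hx
    obtain ⟨j, _, hj⟩ := hx
    exact hTA j hj
  have e := B.equivFinOfCardEq hBcard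
  refine ⟨fun i => ((e.symm i : B) : Fin n → ZMod p), ?_, ?_, ?_⟩
  · intro a b hab
    exact e.symm.injective (Subtype.val_injective hab)
  · intro i
    exact hBA (e.symm i).2
  · have h1 : ∑ i : Fin p, ((e.symm i : B) : Fin n → ZMod p)
        = ∑ b : B, (b : Fin n → ZMod p) := Equiv.sum_comp e.symm _
    rw [h1, ← hBsum]
    exact Finset.sum_coe_sort B id
end
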